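/- If M is a strongly regular sequence (increasing with M_0 = 1, logarithmically convex, of moderate growth, and strongly non-quasianalytic) and s ≥ 1 is a real number, then the sequence M^s defined by (M^s)_j = (M_j)^s is also strongly regular. -/

import Mathlib

def StronglyRegular (M : ℕ → ℝ) : Prop :=
  (∀ j, 0 < M j) ∧ M 0 = 1 ∧ Monotone M ∧
    Monotone (fun j => M (j + 1) / M j) ∧
    (∃ A : ℝ, 0 < A ∧ ∀ j k : ℕ, M (j + k) ≤ A ^ (j + k) * (M j * M k)) ∧
    (∃ A : ℝ, 0 < A ∧ ∀ k n : ℕ,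
      ∑ j ∈ Finset.Ico k n, M j / ((j + 1 : ℝ) * M (j + 1)) ≤ A * (M k / M (k + 1)))

theorem stmt7 (M : ℕ → ℝ) (hM : StronglyRegular M) (s : ℝ) (hs : 1 ≤ s) :
    StronglyRegular (fun j => (M j) ^ s) := by
  obtain ⟨hpos, h0, hmono, hratio, ⟨A, hA, hmod⟩, ⟨B, hB, hsnq⟩⟩ := hM
  have hs0 : (0:ℝ) ≤ s := le_trans zero_le_one hs
  have hs1 : (0:ℝ) ≤ s - 1 := by linarith
  refine ⟨fun j => Real.rpow_pos_of_pos (hpos j) s, by simp [h0], ?_, ?_, ?_, ?_⟩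
  · intro a b hab
    exact Real.rpow_le_rpow (hpos a).le (hmono hab) hs0
  · intro a b hab
    simp only
    rw [← Real.div_rpow (hpos _).le (hpos _).le, ← Real.div_rpow (hpos _).le (hpos _).le]
    exact Real.rpow_le_rpow (div_nonneg (hpos _).le (hpos _).le) (hratio hab) hs0
  · refine ⟨A ^ s, Real.rpow_pos_of_pos hA s, fun j k => ?_⟩
    calc (M (j+k)) ^ s ≤ (A ^ (j+k) * (M j * M k)) ^ s :=
          Real.rpow_le_rpow (hpos _).le (hmod j k) hs0
      _ = (A ^ s) ^ (j+k) * ((M j) ^ s * (M k) ^ s) := by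
          rw [Real.mul_rpow (pow_nonneg hA.le _) (mul_nonneg (hpos _).le (hpos _).le),
            Real.mul_rpow (hpos _).le (hpos _).le,
            ← Real.rpow_natCast A (j+k), ← Real.rpow_natCast (A ^ s) (j+k),
            ← Real.rpow_mul hA.le, ← Real.rpow_mul hA.le, mul_comm s ((j+k:ℕ):ℝ)]
  · refine ⟨B, hB, fun k n => ?_⟩
    have hr : ∀ j, k ≤ j → M j / M (j+1) ≤ M k / M (k+1) := by
      intro j hj
      have h := hratio hj
      simp only at h
      rw [div_le_div_iff₀ (hpos _) (hpos _)] at h ⊢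
      nlinarith
    set r := M k / M (k+1) with hrdef
    have hr0 : 0 < r := div_pos (hpos _) (hpos _)
    have key : ∀ j ∈ Finset.Ico k n,
        (M j) ^ s / ((j+1 : ℝ) * (M (j+1)) ^ s)
          ≤ r ^ (s-1) * (M j / ((j+1 : ℝ) * M (j+1))) := by
      intro j hj
      have hjk := (Finset.mem_Ico.mp hj).1
      have hx : 0 < M j / M (j+1) := div_pos (hpos _) (hpos _)
      have hxs : (M j / M (j+1)) ^ s = (M j / M (j+1)) * (M j / M (j+1)) ^ (s-1) := by
        rw [show s = 1 + (s-1) by ring, Real.rpow_add hx, Real.rpow_one]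
        ring_nf
      have h2 : (M j / M (j+1)) ^ s ≤ (M j / M (j+1)) * r ^ (s-1) := by
        rw [hxs]
        exact mul_le_mul_of_nonneg_left
          (Real.rpow_le_rpow hx.le (hr j hjk) hs1) hx.le
      have hj1 : (0:ℝ) < (j:ℝ) + 1 := by positivity
      have heq : (M j) ^ s / ((j+1 : ℝ) * (M (j+1)) ^ s)
          = (M j / M (j+1)) ^ s / ((j:ℝ)+1) := by
        rw [Real.div_rpow (hpos _).le (hpos _).le]
        field_simp
      rw [heq]
      calc (M j / M (j+1)) ^ s / ((j:ℝ)+1)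
          ≤ ((M j / M (j+1)) * r ^ (s-1)) / ((j:ℝ)+1) := by
            gcongr
        _ = r ^ (s-1) * (M j / ((j+1 : ℝ) * M (j+1))) := by
            field_simp
    calc ∑ j ∈ Finset.Ico k n, (M j) ^ s / ((j+1 : ℝ) * (M (j+1)) ^ s)
        ≤ ∑ j ∈ Finset.Ico k n, r ^ (s-1) * (M j / ((j+1 : ℝ) * M (j+1))) :=
          Finset.sum_le_sum key
      _ = r ^ (s-1) * ∑ j ∈ Finset.Ico k n, M j / ((j+1 : ℝ) * M (j+1)) := by
          rw [Finset.mul_sum]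
      _ ≤ r ^ (s-1) * (B * r) := by
          exact mul_le_mul_of_nonneg_left (hsnq k n) (Real.rpow_nonneg hr0.le _)
      _ = B * ((M k) ^ s / (M (k+1)) ^ s) := by
          rw [← Real.div_rpow (hpos _).le (hpos _).le, ← hrdef,
            show s = 1 + (s-1) by ring, Real.rpow_add hr0, Real.rpow_one]
          ring
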